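/- arXiv:2505.11862 — 4 statements merged into one kernel-verified Lean document; each statement's English description precedes it below -/
import Mathlib

section
/- Stability of the policy update (Theorem 5.4, approximate policy improvement form): let π be a deterministic policy of a finite MDP with discount factor γ ∈ [0,1), let Q̃ : S × A → ℝ satisfy ‖Q̃ − Q^π‖∞ ≤ ε, and let π' be greedy with respect to Q̃ (i.e. Q̃(s, π'(s)) = max_{a∈A} Q̃(s,a) for every s). Then for every state s, V^{π'}(s) ≥ V^π(s) − 2ε/(1 − γ). -/
/-- The policy Bellman operator `(T_π V)(s) = r(s,π(s)) + γ ∑_{s'} P(s'|s,π(s)) V(s')`. -/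
noncomputable def bellmanPol {S A : Type*} [Fintype S] (P : S → A → S → ℝ)
    (r : S → A → ℝ) (γ : ℝ) (π : S → A) (V : S → ℝ) : S → ℝ :=
  fun s => r s (π s) + γ * ∑ s', P s (π s) s' * V s'

/-- The action-value function `Q(s,a) = r(s,a) + γ ∑_{s'} P(s'|s,a) V(s')`. -/
noncomputable def qFun {S A : Type*} [Fintype S] (P : S → A → S → ℝ)
    (r : S → A → ℝ) (γ : ℝ) (V : S → ℝ) (s : S) (a : A) : ℝ :=
  r s a + γ * ∑ s', P s a s' * V s'

/-- Stability of the policy update: if `‖Q̃ − Q^π‖∞ ≤ ε` and `π'` is greedy w.r.t. `Q̃`,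
then `V^{π'}(s) ≥ V^π(s) − 2ε/(1 − γ)` for every state `s`. -/
theorem policy_update_stability
    {S A : Type*} [Fintype S] [Nonempty S] [Fintype A] [Nonempty A]
    (P : S → A → S → ℝ)
    (hP0 : ∀ s a s', 0 ≤ P s a s')
    (hP1 : ∀ s a, ∑ s', P s a s' = 1)
    (r : S → A → ℝ) (γ : ℝ) (hγ0 : 0 ≤ γ) (hγ1 : γ < 1)
    (π π' : S → A) (Vpi Vpi' : S → ℝ)
    (hVpi : ∀ s, Vpi s = bellmanPol P r γ π Vpi s)
    (hVpi' : ∀ s, Vpi' s = bellmanPol P r γ π' Vpi' s)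
    (Qt : S → A → ℝ) (ε : ℝ)
    (hQt : ‖(fun p : S × A => Qt p.1 p.2) - (fun p : S × A => qFun P r γ Vpi p.1 p.2)‖ ≤ ε)
    (hgreedy : ∀ s, Qt s (π' s) = Finset.univ.sup' Finset.univ_nonempty (fun a => Qt s a)) :
    ∀ s, Vpi' s ≥ Vpi s - 2 * ε / (1 - γ) := by
  set d := Finset.univ.inf' Finset.univ_nonempty (fun s => Vpi' s - Vpi s) with hd
  have hε0 : 0 ≤ ε := le_trans (norm_nonneg _) hQt
  have hbound : ∀ s a, |Qt s a - qFun P r γ Vpi s a| ≤ ε := by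
    intro s a
    have h := norm_le_pi_norm
      ((fun p : S × A => Qt p.1 p.2) - fun p : S × A => qFun P r γ Vpi p.1 p.2) (s, a)
    simp only [Pi.sub_apply, Real.norm_eq_abs] at h
    exact h.trans hQt
  have hdle : ∀ s, d ≤ Vpi' s - Vpi s := fun s =>
    Finset.inf'_le _ (Finset.mem_univ s)
  have hkey : ∀ s, Vpi' s - Vpi s ≥ γ * d - 2 * ε := by
    intro s
    have hQpi : qFun P r γ Vpi s (π s) = Vpi s := by
      rw [hVpi s]; rfl
    have h1 : Qt s (π s) ≤ Qt s (π' s) := by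
      rw [hgreedy s]; exact Finset.le_sup' _ (Finset.mem_univ _)
    have a1 := abs_le.mp (hbound s (π' s))
    have a2 := abs_le.mp (hbound s (π s))
    have h2 : qFun P r γ Vpi s (π' s) ≥ Vpi s - 2 * ε := by
      rw [← hQpi]; linarith [a1.1, a1.2, a2.1, a2.2]
    have hsum : (∑ s', P s (π' s) s' * Vpi s') + d ≤ ∑ s', P s (π' s) s' * Vpi' s' := by
      have hterm : ∀ s' ∈ Finset.univ, P s (π' s) s' * (Vpi s' + d) ≤ P s (π' s) s' * Vpi' s' := by
        intro s' _
        apply mul_le_mul_of_nonneg_left _ (hP0 s (π' s) s')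
        linarith [hdle s']
      calc (∑ s', P s (π' s) s' * Vpi s') + d
          = ∑ s', P s (π' s) s' * (Vpi s' + d) := by
            simp [mul_add, Finset.sum_add_distrib, ← Finset.sum_mul, hP1 s (π' s)]
        _ ≤ ∑ s', P s (π' s) s' * Vpi' s' := Finset.sum_le_sum hterm
    have hmain : Vpi' s ≥ qFun P r γ Vpi s (π' s) + γ * d := by
      rw [hVpi' s]
      show r s (π' s) + γ * ∑ s', P s (π' s) s' * Vpi' s' ≥ _
      have := mul_le_mul_of_nonneg_left hsum hγ0
      unfold qFun
      nlinarith
    linarith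
  obtain ⟨s0, -, hs0⟩ := Finset.exists_mem_eq_inf' (Finset.univ_nonempty (α := S))
    (fun s => Vpi' s - Vpi s)
  have hdd : d ≥ γ * d - 2 * ε := by
    have h := hkey s0
    rw [← hs0] at h
    exact h
  have h1γ : 0 < 1 - γ := by linarith
  have hdge : d ≥ -(2 * ε) / (1 - γ) := by
    rw [ge_iff_le, div_le_iff₀ h1γ]; nlinarith
  intro s
  have := hdle s
  have : Vpi' s - Vpi s ≥ -(2 * ε) / (1 - γ) := le_trans hdge this
  have hneg : -(2 * ε) / (1 - γ) = -(2 * ε / (1 - γ)) := by ring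
  linarith [this, hneg ▸ this]
end

section
/- One-step error propagation in approximate policy iteration (Step 2 of the convergence proof): let π and π' be deterministic policies of a finite MDP with discount factor γ ∈ [0,1), and suppose ‖T_{π'} V^π − T V^π‖∞ ≤ c. Then (1 − γ) ‖V* − V^{π'}‖∞ ≤ 2γ ‖V* − V^π‖∞ + c, where V* is the unique fixed point of the optimal Bellman operator T. -/
/-- The optimal Bellman operator
`(T V)(s) = max_{a∈A} [ r(s,a) + γ ∑_{s'} P(s'|s,a) V(s') ]`. -/
noncomputable def bellmanOpt {S A : Type*} [Fintype S] [Fintype A] [Nonempty A]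
    (P : S → A → S → ℝ) (r : S → A → ℝ) (γ : ℝ) (V : S → ℝ) : S → ℝ :=
  fun s => Finset.univ.sup' Finset.univ_nonempty
    (fun a => r s a + γ * ∑ s', P s a s' * V s')

private lemma avg_bound {S : Type*} [Fintype S] (p : S → ℝ) (hp0 : ∀ s, 0 ≤ p s)
    (hp1 : ∑ s, p s = 1) (f : S → ℝ) (M : ℝ) (hf : ∀ s, |f s| ≤ M) :
    |∑ s, p s * f s| ≤ M := by
  calc |∑ s, p s * f s| ≤ ∑ s, |p s * f s| := Finset.abs_sum_le_sum_abs _ _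
    _ ≤ ∑ s, p s * M := by
        apply Finset.sum_le_sum; intro i _
        rw [abs_mul, abs_of_nonneg (hp0 i)]
        exact mul_le_mul_of_nonneg_left (hf i) (hp0 i)
    _ = M := by rw [← Finset.sum_mul, hp1, one_mul]

private lemma sum_diff_bound {S A : Type*} [Fintype S] (P : S → A → S → ℝ)
    (hP0 : ∀ s a s', 0 ≤ P s a s') (hP1 : ∀ s a, ∑ s', P s a s' = 1)
    (U W : S → ℝ) (s : S) (a : A) :
    |∑ s', P s a s' * U s' - ∑ s', P s a s' * W s'| ≤ ‖U - W‖ := by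
  rw [← Finset.sum_sub_distrib]
  have : ∀ s', P s a s' * U s' - P s a s' * W s' = P s a s' * (U s' - W s') := by
    intro s'; ring
  simp only [this]
  exact avg_bound _ (hP0 s a) (hP1 s a) _ _ (fun s' => by
    have := norm_le_pi_norm (U - W) s'
    simpa [Real.norm_eq_abs] using this)

private lemma pol_contr {S A : Type*} [Fintype S] (P : S → A → S → ℝ)
    (hP0 : ∀ s a s', 0 ≤ P s a s') (hP1 : ∀ s a, ∑ s', P s a s' = 1)
    (r : S → A → ℝ) (γ : ℝ) (hγ0 : 0 ≤ γ) (π : S → A) (U W : S → ℝ) (s : S) :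
    |bellmanPol P r γ π U s - bellmanPol P r γ π W s| ≤ γ * ‖U - W‖ := by
  simp only [bellmanPol]
  have h : r s (π s) + γ * ∑ s', P s (π s) s' * U s' -
      (r s (π s) + γ * ∑ s', P s (π s) s' * W s') =
      γ * (∑ s', P s (π s) s' * U s' - ∑ s', P s (π s) s' * W s') := by ring
  rw [h, abs_mul, abs_of_nonneg hγ0]
  exact mul_le_mul_of_nonneg_left (sum_diff_bound P hP0 hP1 U W s (π s)) hγ0

private lemma opt_contr {S A : Type*} [Fintype S] [Fintype A] [Nonempty A]
    (P : S → A → S → ℝ)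
    (hP0 : ∀ s a s', 0 ≤ P s a s') (hP1 : ∀ s a, ∑ s', P s a s' = 1)
    (r : S → A → ℝ) (γ : ℝ) (hγ0 : 0 ≤ γ) (U W : S → ℝ) (s : S) :
    |bellmanOpt P r γ U s - bellmanOpt P r γ W s| ≤ γ * ‖U - W‖ := by
  have key : ∀ (X Y : S → ℝ), bellmanOpt P r γ X s - bellmanOpt P r γ Y s ≤ γ * ‖X - Y‖ := by
    intro X Y
    rw [sub_le_iff_le_add]
    apply Finset.sup'_le
    intro a _
    have h1 : ∑ s', P s a s' * X s' - ∑ s', P s a s' * Y s' ≤ ‖X - Y‖ :=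
      le_of_abs_le (sum_diff_bound P hP0 hP1 X Y s a)
    have h2 : r s a + γ * ∑ s', P s a s' * Y s' ≤ bellmanOpt P r γ Y s :=
      Finset.le_sup' (fun a => r s a + γ * ∑ s', P s a s' * Y s') (Finset.mem_univ a)
    nlinarith [h1, h2]
  rw [abs_sub_le_iff]
  refine ⟨key U W, ?_⟩
  have := key W U
  rwa [show ‖W - U‖ = ‖U - W‖ from norm_sub_rev _ _] at this

/-- One-step error propagation in approximate policy iteration: if
`‖T_{π'} V^π − T V^π‖∞ ≤ c`, then
`(1 − γ) ‖V* − V^{π'}‖∞ ≤ 2γ ‖V* − V^π‖∞ + c`. -/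
theorem api_one_step_error
    {S A : Type*} [Fintype S] [Nonempty S] [Fintype A] [Nonempty A]
    (P : S → A → S → ℝ)
    (hP0 : ∀ s a s', 0 ≤ P s a s')
    (hP1 : ∀ s a, ∑ s', P s a s' = 1)
    (r : S → A → ℝ) (γ : ℝ) (hγ0 : 0 ≤ γ) (hγ1 : γ < 1)
    (π π' : S → A) (Vpi Vpi' Vstar : S → ℝ)
    (hVpi : ∀ s, Vpi s = bellmanPol P r γ π Vpi s)
    (hVpi' : ∀ s, Vpi' s = bellmanPol P r γ π' Vpi' s)
    (hVstar : ∀ s, Vstar s = bellmanOpt P r γ Vstar s)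
    (c : ℝ)
    (hc : ‖bellmanPol P r γ π' Vpi - bellmanOpt P r γ Vpi‖ ≤ c) :
    (1 - γ) * ‖Vstar - Vpi'‖ ≤ 2 * γ * ‖Vstar - Vpi‖ + c := by
  set e := ‖Vstar - Vpi‖ with he
  set d := ‖Vstar - Vpi'‖ with hd
  have hc0 : 0 ≤ c := le_trans (norm_nonneg _) hc
  have hVV : ‖Vpi - Vpi'‖ ≤ e + d := by
    calc ‖Vpi - Vpi'‖ = ‖(Vpi - Vstar) + (Vstar - Vpi')‖ := by ring_nf
      _ ≤ ‖Vpi - Vstar‖ + ‖Vstar - Vpi'‖ := norm_add_le _ _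
      _ = e + d := by rw [norm_sub_rev]
  have hbound : d ≤ γ * e + c + γ * (e + d) := by
    rw [hd]
    apply pi_norm_le_iff_of_nonneg (by positivity) |>.mpr
    intro s
    rw [Pi.sub_apply, Real.norm_eq_abs]
    have h1 : |bellmanOpt P r γ Vstar s - bellmanOpt P r γ Vpi s| ≤ γ * e :=
      opt_contr P hP0 hP1 r γ hγ0 _ _ s
    have h2 : |bellmanOpt P r γ Vpi s - bellmanPol P r γ π' Vpi s| ≤ c := by
      have := norm_le_pi_norm (bellmanPol P r γ π' Vpi - bellmanOpt P r γ Vpi) s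
      rw [Pi.sub_apply, Real.norm_eq_abs] at this
      rw [abs_sub_comm]
      exact le_trans this hc
    have h3 : |bellmanPol P r γ π' Vpi s - bellmanPol P r γ π' Vpi' s| ≤ γ * (e + d) :=
      le_trans (pol_contr P hP0 hP1 r γ hγ0 π' Vpi Vpi' s)
        (mul_le_mul_of_nonneg_left hVV hγ0)
    have heq : Vstar s - Vpi' s =
        (bellmanOpt P r γ Vstar s - bellmanOpt P r γ Vpi s) +
        (bellmanOpt P r γ Vpi s - bellmanPol P r γ π' Vpi s) +
        (bellmanPol P r γ π' Vpi s - bellmanPol P r γ π' Vpi' s) := by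
      rw [hVstar s, hVpi' s]; ring
    rw [heq]
    calc |_ + _ + _| ≤ |_ + _| + |bellmanPol P r γ π' Vpi s - bellmanPol P r γ π' Vpi' s| :=
          abs_add_le _ _
      _ ≤ (|bellmanOpt P r γ Vstar s - bellmanOpt P r γ Vpi s| +
            |bellmanOpt P r γ Vpi s - bellmanPol P r γ π' Vpi s|) + _ := by
          gcongr; exact abs_add_le _ _
      _ ≤ γ * e + c + γ * (e + d) := by gcongr
  nlinarith [norm_nonneg (Vstar - Vpi'), norm_nonneg (Vstar - Vpi)]
end

section
/- One-step recurrence under approximate greedy improvement: let π be a deterministic policy of a finite MDP with discount factor γ ∈ [0,1), let Q̃ : S × A → ℝ satisfy ‖Q̃ − Q^π‖∞ ≤ ε, and let π' be greedy with respect to Q̃ (i.e. Q̃(s, π'(s)) = max_{a∈A} Q̃(s,a) for every s). Then (1 − γ) ‖V* − V^{π'}‖∞ ≤ 2γ ‖V* − V^π‖∞ + 2ε, where V* is the unique fixed point of the optimal Bellman operator T. -/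
/-- One-step recurrence under approximate greedy improvement: if `‖Q̃ − Q^π‖∞ ≤ ε` and
`π'` is greedy w.r.t. `Q̃`, then `(1 − γ) ‖V* − V^{π'}‖∞ ≤ 2γ ‖V* − V^π‖∞ + 2ε`. -/
theorem api_one_step_recurrence
    {S A : Type*} [Fintype S] [Nonempty S] [Fintype A] [Nonempty A]
    (P : S → A → S → ℝ)
    (hP0 : ∀ s a s', 0 ≤ P s a s')
    (hP1 : ∀ s a, ∑ s', P s a s' = 1)
    (r : S → A → ℝ) (γ : ℝ) (hγ0 : 0 ≤ γ) (hγ1 : γ < 1)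
    (π π' : S → A) (Vpi Vpi' Vstar : S → ℝ)
    (hVpi : ∀ s, Vpi s = bellmanPol P r γ π Vpi s)
    (hVpi' : ∀ s, Vpi' s = bellmanPol P r γ π' Vpi' s)
    (hVstar : ∀ s, Vstar s = bellmanOpt P r γ Vstar s)
    (Qt : S → A → ℝ) (ε : ℝ)
    (hQt : ‖(fun p : S × A => Qt p.1 p.2) - (fun p : S × A => qFun P r γ Vpi p.1 p.2)‖ ≤ ε)
    (hgreedy : ∀ s, Qt s (π' s) = Finset.univ.sup' Finset.univ_nonempty (fun a => Qt s a)) :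
    (1 - γ) * ‖Vstar - Vpi'‖ ≤ 2 * γ * ‖Vstar - Vpi‖ + 2 * ε := by
  set D := ‖Vstar - Vpi‖ with hD
  set N := ‖Vstar - Vpi'‖ with hN
  have hε0 : 0 ≤ ε := le_trans (norm_nonneg _) hQt
  have hD0 : 0 ≤ D := norm_nonneg _
  have hN0 : 0 ≤ N := norm_nonneg _
  -- pointwise bound on Qt vs Qπ
  have hQpt : ∀ s a, |Qt s a - qFun P r γ Vpi s a| ≤ ε := by
    intro s a
    have h := norm_le_pi_norm
      ((fun p : S × A => Qt p.1 p.2) - fun p : S × A => qFun P r γ Vpi p.1 p.2) (s, a)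
    have := h.trans hQt
    simpa [Real.norm_eq_abs] using this
  -- averaging lemma
  have havg : ∀ (s : S) (a : A) (U W : S → ℝ),
      |(∑ s', P s a s' * U s') - ∑ s', P s a s' * W s'| ≤ ‖U - W‖ := by
    intro s a U W
    rw [← Finset.sum_sub_distrib]
    calc |∑ s', (P s a s' * U s' - P s a s' * W s')|
        ≤ ∑ s', |P s a s' * U s' - P s a s' * W s'| := Finset.abs_sum_le_sum_abs _ _
      _ = ∑ s', P s a s' * |U s' - W s'| := by
          refine Finset.sum_congr rfl fun s' _ => ?_
          rw [← mul_sub, abs_mul, abs_of_nonneg (hP0 s a s')]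
      _ ≤ ∑ s', P s a s' * ‖U - W‖ := by
          refine Finset.sum_le_sum fun s' _ => mul_le_mul_of_nonneg_left ?_ (hP0 s a s')
          have := norm_le_pi_norm (U - W) s'
          simpa [Real.norm_eq_abs] using this
      _ = ‖U - W‖ := by rw [← Finset.sum_mul, hP1, one_mul]
  -- Q* vs Qπ
  have hQstar : ∀ s a, |qFun P r γ Vstar s a - qFun P r γ Vpi s a| ≤ γ * D := by
    intro s a
    have h := havg s a Vstar Vpi
    have : qFun P r γ Vstar s a - qFun P r γ Vpi s a
        = γ * ((∑ s', P s a s' * Vstar s') - ∑ s', P s a s' * Vpi s') := by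
      simp [qFun]; ring
    rw [this, abs_mul, abs_of_nonneg hγ0]
    exact mul_le_mul_of_nonneg_left h hγ0
  -- Q* vs Qt
  have hQsQt : ∀ s a, |qFun P r γ Vstar s a - Qt s a| ≤ γ * D + ε := by
    intro s a
    have h1 := hQstar s a
    have h2 := hQpt s a
    calc |qFun P r γ Vstar s a - Qt s a|
        = |(qFun P r γ Vstar s a - qFun P r γ Vpi s a)
            + (qFun P r γ Vpi s a - Qt s a)| := by ring_nf
      _ ≤ |qFun P r γ Vstar s a - qFun P r γ Vpi s a|
            + |qFun P r γ Vpi s a - Qt s a| := abs_add_le _ _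
      _ ≤ γ * D + ε := by
          have := abs_sub_comm (Qt s a) (qFun P r γ Vpi s a)
          linarith [h1, h2, this.le, abs_sub_comm (qFun P r γ Vpi s a) (Qt s a)]
  -- gap bound
  have hgap : ∀ s, Vstar s - qFun P r γ Vstar s (π' s) ≤ 2 * (γ * D + ε) ∧
      0 ≤ Vstar s - qFun P r γ Vstar s (π' s) := by
    intro s
    have hVs : Vstar s = Finset.univ.sup' Finset.univ_nonempty
        (fun a => qFun P r γ Vstar s a) := by
      rw [hVstar s]; rfl
    constructor
    · rw [hVs]
      have h1 : Finset.univ.sup' Finset.univ_nonempty (fun a => qFun P r γ Vstar s a)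
          ≤ Qt s (π' s) + (γ * D + ε) := by
        rw [hgreedy s]
        apply Finset.sup'_le
        intro a _
        have := Finset.le_sup' (fun a => Qt s a) (Finset.mem_univ a)
        have h := abs_le.mp (hQsQt s a)
        linarith [h.2, this]
      have h2 : Qt s (π' s) ≤ qFun P r γ Vstar s (π' s) + (γ * D + ε) := by
        have h := abs_le.mp (hQsQt s (π' s))
        linarith [h.1]
      linarith
    · rw [hVs]
      have := Finset.le_sup' (fun a => qFun P r γ Vstar s a) (Finset.mem_univ (π' s))
      linarith [sub_nonneg.mpr this]
  -- pointwise bound on Vstar - Vpi'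
  have hpt : ∀ s, |Vstar s - Vpi' s| ≤ 2 * (γ * D + ε) + γ * N := by
    intro s
    have hsplit : Vstar s - Vpi' s
        = (Vstar s - qFun P r γ Vstar s (π' s))
          + γ * ((∑ s', P s (π' s) s' * Vstar s') - ∑ s', P s (π' s) s' * Vpi' s') := by
      rw [hVpi' s]
      simp [qFun, bellmanPol]; ring
    have h1 := (hgap s).1
    have h2 := (hgap s).2
    have h3 : |γ * ((∑ s', P s (π' s) s' * Vstar s') - ∑ s', P s (π' s) s' * Vpi' s')|
        ≤ γ * N := by
      rw [abs_mul, abs_of_nonneg hγ0]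
      exact mul_le_mul_of_nonneg_left (havg s (π' s) Vstar Vpi') hγ0
    have h4 := abs_le.mp h3
    rw [hsplit]
    rw [abs_le]
    constructor <;> [linarith [h4.1]; linarith [h4.2]]
  have hNle : N ≤ 2 * (γ * D + ε) + γ * N := by
    rw [hN]
    apply pi_norm_le_iff_of_nonneg (by positivity) |>.mpr
    intro s
    simpa [Real.norm_eq_abs] using hpt s
  linarith
end

section
/- Policy iteration convergence (Theorem 5.3, explicit finite-horizon form): consider a finite MDP with discount factor γ ∈ [0, 1/3), and a sequence of deterministic policies π_0, π_1, …, π_K such that for each k < K there is Q̂^{π_k} : S × A → ℝ with ‖Q̂^{π_k} − Q^{π_k}‖∞ ≤ ε and π_{k+1}(s) maximizes Q̂^{π_k}(s, ·) for every state s. Then ‖V* − V^{π_K}‖∞ ≤ (2γ/(1 − γ))^K ‖V* − V^{π_0}‖∞ + 2ε/(1 − 3γ). -/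
set_option linter.unusedSectionVars false in
lemma qFun_lip {S A : Type*} [Fintype S] (P : S → A → S → ℝ)
    (hP0 : ∀ s a s', 0 ≤ P s a s')
    (hP1 : ∀ s a, ∑ s', P s a s' = 1) (r : S → A → ℝ) {γ : ℝ} (hγ0 : 0 ≤ γ)
    (V W : S → ℝ) (s : S) (a : A) :
    |qFun P r γ V s a - qFun P r γ W s a| ≤ γ * ‖V - W‖ := by
  have h : qFun P r γ V s a - qFun P r γ W s a
      = γ * ∑ s', P s a s' * (V s' - W s') := by
    have : ∑ s', P s a s' * (V s' - W s')
        = ∑ s', P s a s' * V s' - ∑ s', P s a s' * W s' := by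
      rw [← Finset.sum_sub_distrib]
      exact Finset.sum_congr rfl fun i _ => mul_sub _ _ _
    simp only [qFun, this]; ring
  rw [h, abs_mul, abs_of_nonneg hγ0]
  have hb : |∑ s', P s a s' * (V s' - W s')| ≤ ‖V - W‖ := by
    calc |∑ s', P s a s' * (V s' - W s')| ≤ ∑ s', |P s a s' * (V s' - W s')| :=
          Finset.abs_sum_le_sum_abs _ _
      _ ≤ ∑ s', P s a s' * ‖V - W‖ := by
          apply Finset.sum_le_sum; intro i _
          rw [abs_mul, abs_of_nonneg (hP0 s a i)]
          have := norm_le_pi_norm (V - W) i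
          simp only [Pi.sub_apply, Real.norm_eq_abs] at this
          exact mul_le_mul_of_nonneg_left this (hP0 s a i)
      _ = ‖V - W‖ := by rw [← Finset.sum_mul, hP1]; ring
  exact mul_le_mul_of_nonneg_left hb hγ0

lemma bellmanOpt_eq_sup_qFun {S A : Type*} [Fintype S] [Fintype A] [Nonempty A]
    (P : S → A → S → ℝ) (r : S → A → ℝ) (γ : ℝ) (V : S → ℝ) (s : S) :
    bellmanOpt P r γ V s = Finset.univ.sup' Finset.univ_nonempty (fun a => qFun P r γ V s a) :=
  rfl

lemma bellmanOpt_lip {S A : Type*} [Fintype S] [Fintype A] [Nonempty A]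
    (P : S → A → S → ℝ) (hP0 : ∀ s a s', 0 ≤ P s a s')
    (hP1 : ∀ s a, ∑ s', P s a s' = 1) (r : S → A → ℝ) {γ : ℝ} (hγ0 : 0 ≤ γ)
    (V W : S → ℝ) (s : S) :
    |bellmanOpt P r γ V s - bellmanOpt P r γ W s| ≤ γ * ‖V - W‖ := by
  rw [abs_sub_le_iff]
  constructor
  · rw [bellmanOpt_eq_sup_qFun, bellmanOpt_eq_sup_qFun, sub_le_iff_le_add]
    apply Finset.sup'_le
    intro a _
    have h1 := (abs_sub_le_iff.mp (qFun_lip P hP0 hP1 r hγ0 V W s a)).1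
    have h2 := Finset.le_sup' (fun a => qFun P r γ W s a) (Finset.mem_univ a)
    linarith
  · rw [bellmanOpt_eq_sup_qFun, bellmanOpt_eq_sup_qFun, sub_le_iff_le_add]
    apply Finset.sup'_le
    intro a _
    have h1 := (abs_sub_le_iff.mp (qFun_lip P hP0 hP1 r hγ0 V W s a)).2
    have h2 := Finset.le_sup' (fun a => qFun P r γ V s a) (Finset.mem_univ a)
    linarith

/-- Policy iteration convergence (explicit finite-horizon form): for `γ ∈ [0,1/3)` and
approximate greedy updates with error `ε`,
`‖V* − V^{π_K}‖∞ ≤ (2γ/(1 − γ))^K ‖V* − V^{π_0}‖∞ + 2ε/(1 − 3γ)`. -/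
theorem policy_iteration_convergence
    {S A : Type*} [Fintype S] [Nonempty S] [Fintype A] [Nonempty A]
    (P : S → A → S → ℝ)
    (hP0 : ∀ s a s', 0 ≤ P s a s')
    (hP1 : ∀ s a, ∑ s', P s a s' = 1)
    (r : S → A → ℝ) (γ : ℝ) (hγ0 : 0 ≤ γ) (hγ : γ < 1 / 3)
    (ε : ℝ) (hε : 0 ≤ ε) (K : ℕ)
    (π : ℕ → S → A) (Vpi : ℕ → S → ℝ) (Vstar : S → ℝ)
    (hVpi : ∀ k s, Vpi k s = bellmanPol P r γ (π k) (Vpi k) s)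
    (hVstar : ∀ s, Vstar s = bellmanOpt P r γ Vstar s)
    (himp : ∀ k < K, ∃ Qh : S → A → ℝ,
      ‖(fun p : S × A => Qh p.1 p.2) -
        (fun p : S × A => qFun P r γ (Vpi k) p.1 p.2)‖ ≤ ε ∧
      ∀ s, Qh s (π (k + 1) s) = Finset.univ.sup' Finset.univ_nonempty (fun a => Qh s a)) :
    ‖Vstar - Vpi K‖ ≤ (2 * γ / (1 - γ)) ^ K * ‖Vstar - Vpi 0‖ + 2 * ε / (1 - 3 * γ) := by
  have hγ1 : (0:ℝ) < 1 - γ := by linarith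
  have hγ3 : (0:ℝ) < 1 - 3 * γ := by linarith
  set ρ : ℝ := 2 * γ / (1 - γ) with hρdef
  set c : ℝ := 2 * ε / (1 - γ) with hcdef
  have hρ0 : 0 ≤ ρ := by positivity
  have hρ1 : ρ < 1 := by rw [hρdef, div_lt_one hγ1]; linarith
  have hc0 : 0 ≤ c := by positivity
  set D : ℕ → ℝ := fun k => ‖Vstar - Vpi k‖ with hDdef
  have hD0 : ∀ k, 0 ≤ D k := fun k => norm_nonneg _
  -- one-step contraction
  have step : ∀ k < K, D (k + 1) ≤ ρ * D k + c := by
    intro k hk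
    obtain ⟨Qh, hQh, hgreedy⟩ := himp k hk
    have hcomp : ∀ s a, |Qh s a - qFun P r γ (Vpi k) s a| ≤ ε := by
      intro s a
      have := norm_le_pi_norm
        ((fun p : S × A => Qh p.1 p.2) - (fun p : S × A => qFun P r γ (Vpi k) p.1 p.2)) (s, a)
      simp only [Pi.sub_apply, Real.norm_eq_abs] at this
      exact this.trans hQh
    -- pointwise bound
    have hpt : ∀ s, |Vstar s - Vpi (k + 1) s|
        ≤ γ * D k + 2 * ε + γ * ‖Vpi k - Vpi (k + 1)‖ := by
      intro s
      have hA1 : |bellmanOpt P r γ Vstar s - bellmanOpt P r γ (Vpi k) s| ≤ γ * D k :=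
        bellmanOpt_lip P hP0 hP1 r hγ0 _ _ s
      have hA3 : |qFun P r γ (Vpi k) s (π (k + 1) s) - qFun P r γ (Vpi (k + 1)) s (π (k + 1) s)|
          ≤ γ * ‖Vpi k - Vpi (k + 1)‖ :=
        qFun_lip P hP0 hP1 r hγ0 _ _ s _
      -- middle term
      have hmidlo : qFun P r γ (Vpi k) s (π (k + 1) s) ≤ bellmanOpt P r γ (Vpi k) s := by
        rw [bellmanOpt_eq_sup_qFun]
        exact Finset.le_sup' _ (Finset.mem_univ _)
      have hmidhi : bellmanOpt P r γ (Vpi k) s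
          ≤ qFun P r γ (Vpi k) s (π (k + 1) s) + 2 * ε := by
        rw [bellmanOpt_eq_sup_qFun]
        apply Finset.sup'_le
        intro a _
        have h1 := (abs_sub_le_iff.mp (hcomp s a)).2
        have h2 := Finset.le_sup' (fun a => Qh s a) (Finset.mem_univ a)
        have h3 := (abs_sub_le_iff.mp (hcomp s (π (k + 1) s))).1
        have h4 := hgreedy s
        linarith
      have hVs : Vstar s = bellmanOpt P r γ Vstar s := hVstar s
      have hVp : Vpi (k + 1) s = qFun P r γ (Vpi (k + 1)) s (π (k + 1) s) := hVpi (k + 1) s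
      rw [abs_le] at hA1 hA3 ⊢
      constructor <;> [skip; skip] <;>
        (first
          | (have := hA1.1; have := hA3.1; rw [hVs, hVp]; linarith)
          | (have := hA1.2; have := hA3.2; rw [hVs, hVp]; linarith))
    have htri : ‖Vpi k - Vpi (k + 1)‖ ≤ D k + D (k + 1) := by
      have : Vpi k - Vpi (k + 1) = -(Vstar - Vpi k) + (Vstar - Vpi (k + 1)) := by abel
      rw [this]
      calc ‖-(Vstar - Vpi k) + (Vstar - Vpi (k + 1))‖
          ≤ ‖-(Vstar - Vpi k)‖ + ‖Vstar - Vpi (k + 1)‖ := norm_add_le _ _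
        _ = D k + D (k + 1) := by rw [norm_neg]
    have hDle : D (k + 1) ≤ γ * D k + 2 * ε + γ * (D k + D (k + 1)) := by
      have hb : 0 ≤ γ * D k + 2 * ε + γ * ‖Vpi k - Vpi (k + 1)‖ := by positivity
      have this : ‖Vstar - Vpi (k + 1)‖ ≤ γ * D k + 2 * ε + γ * ‖Vpi k - Vpi (k + 1)‖ :=
        (pi_norm_le_iff_of_nonneg hb).mpr (fun s => by
          simpa [Real.norm_eq_abs] using hpt s)
      have hmul : γ * ‖Vpi k - Vpi (k + 1)‖ ≤ γ * (D k + D (k + 1)) :=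
        mul_le_mul_of_nonneg_left htri hγ0
      calc D (k + 1) = ‖Vstar - Vpi (k + 1)‖ := rfl
        _ ≤ γ * D k + 2 * ε + γ * ‖Vpi k - Vpi (k + 1)‖ := this
        _ ≤ γ * D k + 2 * ε + γ * (D k + D (k + 1)) := by linarith
    rw [hρdef, hcdef, div_mul_eq_mul_div, ← add_div, le_div_iff₀ hγ1]
    nlinarith [hD0 (k + 1)]
  -- unroll the recurrence
  have unroll : ∀ n ≤ K, D n ≤ ρ ^ n * D 0 + c * ∑ i ∈ Finset.range n, ρ ^ i := by
    intro n hn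
    induction n with
    | zero => simp
    | succ m ih =>
      have hm : m ≤ K := le_of_lt (Nat.lt_of_succ_le hn)
      have ihm := ih hm
      have hstep := step m (Nat.lt_of_succ_le hn)
      calc D (m + 1) ≤ ρ * D m + c := hstep
        _ ≤ ρ * (ρ ^ m * D 0 + c * ∑ i ∈ Finset.range m, ρ ^ i) + c :=
            by nlinarith
        _ = ρ ^ (m + 1) * D 0 + c * ∑ i ∈ Finset.range (m + 1), ρ ^ i := by
            rw [geom_sum_succ]; ring
  have hfinal := unroll K le_rfl
  have hne1 : (1 - γ) ≠ 0 := ne_of_gt hγ1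
  have hne3 : (1 - 3 * γ) ≠ 0 := ne_of_gt hγ3
  have hsum : ∑ i ∈ Finset.range K, ρ ^ i ≤ 1 / (1 - ρ) := by
    rw [geom_sum_eq (by linarith : ρ ≠ 1)]
    have heq : (ρ ^ K - 1) / (ρ - 1) = (1 - ρ ^ K) / (1 - ρ) := by
      rw [div_eq_div_iff (by linarith) (by linarith)]; ring
    rw [heq]
    gcongr
    · linarith [pow_nonneg hρ0 K]
  have hcsum : c * ∑ i ∈ Finset.range K, ρ ^ i ≤ 2 * ε / (1 - 3 * γ) := by
    calc c * ∑ i ∈ Finset.range K, ρ ^ i ≤ c * (1 / (1 - ρ)) :=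
          mul_le_mul_of_nonneg_left hsum hc0
      _ = 2 * ε / (1 - 3 * γ) := by
          have h1ρ : 1 - ρ = (1 - 3 * γ) / (1 - γ) := by
            rw [hρdef]; field_simp; ring
          rw [hcdef, h1ρ]
          rw [one_div_div, div_mul_div_comm]
          rw [div_eq_div_iff (by positivity) hne3]
          ring
  calc ‖Vstar - Vpi K‖ = D K := rfl
    _ ≤ ρ ^ K * D 0 + c * ∑ i ∈ Finset.range K, ρ ^ i := hfinal
    _ ≤ (2 * γ / (1 - γ)) ^ K * ‖Vstar - Vpi 0‖ + 2 * ε / (1 - 3 * γ) := by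
        rw [hρdef]; exact add_le_add le_rfl hcsum
end
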